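/- Let p be a prime of the form p = u² + 64 with u ≡ 1 (mod 4), and let A be the Neumann–Setzer elliptic curve y² + xy = x³ + ((u−1)/4)x² + 4x + u. Then the trace of Frobenius at 2 satisfies a₂ = −1 if p ≡ 1 (mod 16) (equivalently u ≡ 1 (mod 8)), and a₂ = 1 if p ≡ 9 (mod 16) (equivalently u ≡ 5 (mod 8)). -/

import Mathlib

instance (W : WeierstrassCurve.Affine (ZMod 2)) (x y : ZMod 2) : Decidable (W.Equation x y) :=
  decidable_of_iff _ (W.equation_iff x y).symm

instance (W : WeierstrassCurve.Affine (ZMod 2)) (x y : ZMod 2) : Decidable (W.Nonsingular x y) :=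
  decidable_of_iff _ (W.nonsingular_iff' x y).symm

/-- The points of an affine Weierstrass curve are the point at infinity together with the
nonsingular affine points. -/
def nsPointEquivAux {R : Type*} [CommRing R] (W : WeierstrassCurve.Affine R) :
    W.Point ≃ Option {p : R × R // W.Nonsingular p.1 p.2} where
  toFun P := match P with
    | .zero => none
    | @WeierstrassCurve.Affine.Point.some _ _ _ x y h => some ⟨(x, y), h⟩
  invFun o := match o with
    | none => .zero
    | some ⟨(_, _), h⟩ => .some _ _ h
  left_inv P := by cases P <;> rfl
  right_inv o := by rcases o with _ | ⟨⟨x, y⟩, h⟩ <;> rfl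

lemma ns_card_one : Nat.card (⟨1, 0, 0, 0, 1⟩ : WeierstrassCurve (ZMod 2)).toAffine.Point = 4 := by
  rw [Nat.card_congr (nsPointEquivAux _), Nat.card_eq_fintype_card]
  decide

lemma ns_card_five : Nat.card (⟨1, 1, 0, 0, 1⟩ : WeierstrassCurve (ZMod 2)).toAffine.Point = 2 := by
  rw [Nat.card_congr (nsPointEquivAux _), Nat.card_eq_fintype_card]
  decide

lemma ns_map_eq (u c : ℤ) (hu : u % 4 = 1) (hc : (u - 1) / 4 % 2 = c % 2) :
    ((⟨1, (u - 1) / 4, 0, 4, u⟩ : WeierstrassCurve ℤ).map (Int.castRingHom (ZMod 2))) =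
      ⟨1, (c : ZMod 2), 0, 0, 1⟩ := by
  have h2 : ∀ a b : ℤ, a % 2 = b % 2 → ((a : ZMod 2) = (b : ZMod 2)) := by
    intro a b hab
    have : (2 : ℤ) ∣ (a - b) := by omega
    have := (ZMod.intCast_zmod_eq_zero_iff_dvd (a - b) 2).mpr this
    push_cast at this
    linear_combination this
  have e1 : (((u - 1) / 4 : ℤ) : ZMod 2) = (c : ZMod 2) := h2 _ _ hc
  have e2 : ((u : ℤ) : ZMod 2) = ((1 : ℤ) : ZMod 2) := h2 _ _ (by omega)
  have e3 : ((4 : ℤ) : ZMod 2) = ((0 : ℤ) : ZMod 2) := h2 _ _ (by norm_num)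
  ext <;> simp [WeierstrassCurve.map] <;> push_cast at e1 e2 e3 ⊢ <;>
    simp_all

/-- let `p = u² + 64` be prime with `u ≡ 1 (mod 4)` and let `A` be the
Neumann–Setzer curve `y² + xy = x³ + ((u-1)/4)x² + 4x + u`.  Then the trace of Frobenius
at 2, `a₂ = 2 + 1 - #A(𝔽₂)`, equals `-1` if `p ≡ 1 (mod 16)` and `1` if `p ≡ 9 (mod 16)`. -/
theorem stmt_5 (u : ℤ) (hu : u % 4 = 1) (hp : Prime (u ^ 2 + 64)) :
    ((u ^ 2 + 64) % 16 = 1 →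
      (2 : ℤ) + 1 - (Nat.card (((⟨1, (u - 1) / 4, 0, 4, u⟩ : WeierstrassCurve ℤ).map
        (Int.castRingHom (ZMod 2))).toAffine.Point) : ℤ) = -1) ∧
    ((u ^ 2 + 64) % 16 = 9 →
      (2 : ℤ) + 1 - (Nat.card (((⟨1, (u - 1) / 4, 0, 4, u⟩ : WeierstrassCurve ℤ).map
        (Int.castRingHom (ZMod 2))).toAffine.Point) : ℤ) = 1) := by
  obtain ⟨k, hk⟩ : ∃ k, u = 4 * k + 1 := ⟨u / 4, by omega⟩
  have hsq : u ^ 2 + 64 = 16 * (k * k) + 8 * k + 65 := by rw [hk]; ring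
  set m := k * k with hm
  constructor
  · intro h1
    rw [hsq] at h1
    have hkev : k % 2 = 0 := by omega
    rw [ns_map_eq u 0 hu (by omega)]
    norm_num [ns_card_one]
  · intro h1
    rw [hsq] at h1
    have hkodd : k % 2 = 1 := by omega
    rw [ns_map_eq u 1 hu (by omega)]
    norm_num [ns_card_five]
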